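/- There is no 3-dimensional normal simplicial pseudo manifold with Euler characteristic −1. In particular, the gluing Δ^{G¹} dual to the GFT graph G¹, which has two vertices, four edges, two triangles and one tetrahedron (χ = 2 − 4 + 2 − 1 = −1), is not homeomorphic to (has the face vector of) any 3-dimensional normal pseudo manifold. -/

import Mathlib

open Finset

variable {V : Type*} [DecidableEq V]

/-- A finite abstract simplicial complex: a finite collection of finite subsets
closed under taking subsets. -/
def IsComplex (Δ : Finset (Finset V)) : Prop :=
  ∀ σ ∈ Δ, ∀ τ ⊆ σ, τ ∈ Δ

/-- The link of a simplex `τ`. -/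
def lkS (Δ : Finset (Finset V)) (τ : Finset V) : Finset (Finset V) :=
  Δ.filter fun σ => σ ∩ τ = ∅ ∧ σ ∪ τ ∈ Δ

/-- The link of a vertex `v`. -/
def lk (Δ : Finset (Finset V)) (v : V) : Finset (Finset V) :=
  Δ.filter fun σ => v ∉ σ ∧ insert v σ ∈ Δ

/-- The closed star of a vertex `v`. -/
def closedStar (Δ : Finset (Finset V)) (v : V) : Finset (Finset V) :=
  Δ.filter fun σ => insert v σ ∈ Δ

/-- The deletion of a vertex `v`. -/
def deletion (Δ : Finset (Finset V)) (v : V) : Finset (Finset V) :=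
  Δ.filter fun σ => v ∉ σ

/-- Number of simplices of cardinality `p` (i.e. of dimension `p - 1`). -/
def fm (Δ : Finset (Finset V)) (p : ℕ) : ℕ :=
  (Δ.filter fun σ => σ.card = p).card

/-- Number of simplices of dimension `p` (i.e. of cardinality `p + 1`). -/
def fdim (Δ : Finset (Finset V)) (p : ℕ) : ℕ := fm Δ (p + 1)

/-- Euler characteristic `χ(Δ) = Σ_{p ≥ 0} (-1)^p f^p(Δ)` (empty simplex excluded). -/
def chi (Δ : Finset (Finset V)) : ℤ :=
  ∑ σ ∈ Δ.filter (fun σ => σ ≠ ∅), (-1 : ℤ) ^ (σ.card - 1)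

/-- The vertex set of a complex. -/
def verts (Δ : Finset (Finset V)) : Finset V := Δ.biUnion id

/-- `Δ` is pure of dimension `n`: every simplex is a face of some `n`-simplex. -/
def IsPure (Δ : Finset (Finset V)) (n : ℕ) : Prop :=
  ∀ σ ∈ Δ, ∃ ρ ∈ Δ, σ ⊆ ρ ∧ ρ.card = n + 1

/-- `Δ` is non-branching in dimension `n`: every `(n-1)`-simplex (cardinality `n`)
is a face of exactly two `n`-simplices (cardinality `n+1`). -/
def NonBranching (Δ : Finset (Finset V)) (n : ℕ) : Prop :=
  ∀ σ ∈ Δ, σ.card = n → (Δ.filter fun ρ => ρ.card = n + 1 ∧ σ ⊆ ρ).card = 2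

/-- Two `n`-simplices are adjacent if they share an `(n-1)`-face. -/
def adjFacet (Δ : Finset (Finset V)) (n : ℕ) (σ ρ : Finset V) : Prop :=
  σ ∈ Δ ∧ ρ ∈ Δ ∧ σ.card = n + 1 ∧ ρ.card = n + 1 ∧ (σ ∩ ρ).card = n

/-- Strong connectivity: any two `n`-simplices are joined by a chain of `n`-simplices,
consecutive ones sharing an `(n-1)`-face. -/
def StronglyConnected (Δ : Finset (Finset V)) (n : ℕ) : Prop :=
  ∀ σ ∈ Δ, σ.card = n + 1 → ∀ ρ ∈ Δ, ρ.card = n + 1 →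
    Relation.ReflTransGen (adjFacet Δ n) σ ρ

/-- An `n`-dimensional simplicial pseudo manifold. -/
def PseudoManifold (Δ : Finset (Finset V)) (n : ℕ) : Prop :=
  IsComplex Δ ∧ IsPure Δ n ∧ NonBranching Δ n ∧ StronglyConnected Δ n

/-- Normality for a 3-dimensional pseudo manifold: all vertex links are
2-dimensional pseudo manifolds. -/
def Normal3 (Δ : Finset (Finset V)) : Prop :=
  ∀ v ∈ verts Δ, PseudoManifold (lk Δ v) 2

private def reachN (C : Finset (Finset V)) (x₀ : V) : ℕ → V → Prop
  | 0 => fun x => x = x₀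
  | n+1 => fun x => ∃ y, reachN C x₀ n y ∧ ({y, x} : Finset V) ∈ C

private lemma reachN_of_rtg {C : Finset (Finset V)} {x₀ x : V}
    (h : Relation.ReflTransGen (fun a b => ({a, b} : Finset V) ∈ C) x₀ x) :
    ∃ n, reachN C x₀ n x := by
  induction h with
  | refl => exact ⟨0, rfl⟩
  | tail h₁ h₂ ih => obtain ⟨n, hn⟩ := ih; exact ⟨n + 1, _, hn, h₂⟩

lemma graph_card (C : Finset (Finset V)) (x₀ : V) (S : Finset V)
    (hS : ∀ x ∈ S, Relation.ReflTransGen (fun a b => ({a, b} : Finset V) ∈ C) x₀ x) :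
    S.card ≤ C.card + 1 := by
  classical
  set dd : V → ℕ := fun x => if hx : ∃ n, reachN C x₀ n x then Nat.find hx else 0 with hdd
  have key : ∀ x ∈ S.erase x₀, ∃ y, ({y, x} : Finset V) ∈ C ∧ dd y < dd x := by
    intro x hx
    have hxS : x ∈ S := Finset.mem_of_mem_erase hx
    have hxne : x ≠ x₀ := Finset.ne_of_mem_erase hx
    have hex : ∃ n, reachN C x₀ n x := reachN_of_rtg (hS x hxS)
    have hdx : dd x = Nat.find hex := by simp [hdd, hex]
    have hpos : Nat.find hex ≠ 0 := by
      intro h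
      have := Nat.find_spec hex; rw [h] at this; exact hxne this
    obtain ⟨n, hn⟩ := Nat.exists_eq_succ_of_ne_zero hpos
    have hspec := Nat.find_spec hex
    rw [hn] at hspec
    obtain ⟨y, hy, hyC⟩ := hspec
    refine ⟨y, hyC, ?_⟩
    have hey : ∃ m, reachN C x₀ m y := ⟨n, hy⟩
    have h1 : dd y ≤ n := by
      simp only [hdd, hey, dif_pos]
      exact Nat.find_le hy
    rw [hdx, hn]; omega
  -- injection from S.erase x₀ into C
  set f : V → Finset V := fun x =>
    if h : ∃ y, ({y, x} : Finset V) ∈ C ∧ dd y < dd x then {h.choose, x} else ∅ with hf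
  have hmem : ∀ x ∈ S.erase x₀, f x ∈ C ∧ x ∈ f x ∧ (∀ z ∈ f x, z ≠ x → dd z < dd x) := by
    intro x hx
    have h := key x hx
    simp only [hf, dif_pos h]
    obtain ⟨h1, h2⟩ := h.choose_spec
    refine ⟨h1, by simp, ?_⟩
    intro z hz hzx
    rcases Finset.mem_insert.mp hz with rfl | hz2
    · exact h2
    · exact absurd (Finset.mem_singleton.mp hz2) hzx
  have hinj : Set.InjOn f (S.erase x₀) := by
    intro a ha b hb hab
    obtain ⟨haC, haa, hda⟩ := hmem a ha
    obtain ⟨hbC, hbb, hdb⟩ := hmem b hb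
    by_contra hne
    have h1 : dd a < dd b := hdb a (hab ▸ haa) hne
    have h2 : dd b < dd a := hda b (hab ▸ hbb) (Ne.symm hne)
    omega
  have hcard : (S.erase x₀).card ≤ C.card :=
    Finset.card_le_card_of_injOn f (fun x hx => (hmem x hx).1) hinj
  by_cases hx₀ : x₀ ∈ S
  · rw [← Finset.card_erase_add_one hx₀]; omega
  · rw [Finset.erase_eq_of_notMem hx₀] at hcard; omega



lemma exists_order {α : Type*} [DecidableEq α] (T : Finset α) (adj : α → α → Prop)
    (hconn : ∀ s ∈ T, ∀ t ∈ T, Relation.ReflTransGen (fun a b => a ∈ T ∧ b ∈ T ∧ adj a b) s t)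
    (hne : T.Nonempty) :
    ∃ l : List α, l.Nodup ∧ l.toFinset = T ∧ ∀ (j : ℕ) (hj : j < l.length), 0 < j →
      ∃ (i : ℕ) (hi : i < l.length), i < j ∧ adj (l.get ⟨i, hi⟩) (l.get ⟨j, hj⟩) := by
  classical
  obtain ⟨t₀, ht₀⟩ := hne
  -- crossing lemma
  have cross : ∀ S : Finset α, t₀ ∈ S → S ⊆ T → ∀ t ∈ T, t ∉ S →
      ∃ u ∈ S, ∃ v ∈ T, v ∉ S ∧ adj u v := by
    intro S ht₀S hST t htT htS
    have hpath := hconn t₀ ht₀ t htT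
    clear htT
    induction hpath with
    | refl => exact absurd ht₀S htS
    | @tail b c h₁ h₂ ih =>
      by_cases hb : b ∈ S
      · exact ⟨b, hb, c, h₂.2.1, htS, h₂.2.2⟩
      · exact ih hb
  -- grow lists
  have grow : ∀ k : ℕ, k + 1 ≤ T.card → ∃ l : List α, l.Nodup ∧ (∀ x ∈ l, x ∈ T) ∧
      t₀ ∈ l ∧ l.length = k + 1 ∧ (∀ (j : ℕ) (hj : j < l.length), 0 < j →
      ∃ (i : ℕ) (hi : i < l.length), i < j ∧ adj (l.get ⟨i, hi⟩) (l.get ⟨j, hj⟩)) := by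
    intro k
    induction k with
    | zero =>
      intro _
      refine ⟨[t₀], by simp, by simpa, by simp, by simp, ?_⟩
      intro j hj hjpos
      simp at hj
      omega
    | succ k ih =>
      intro hk
      obtain ⟨l, hnd, hsub, ht0l, hlen, hch⟩ := ih (by omega)
      have hSsub : l.toFinset ⊆ T := by intro x hx; exact hsub x (List.mem_toFinset.mp hx)
      have hScard : l.toFinset.card < T.card := by
        have := List.toFinset_card_of_nodup hnd
        omega
      obtain ⟨t, htT, htS⟩ : ∃ t ∈ T, t ∉ l.toFinset := by
        by_contra h
        push_neg at h
        have : T ⊆ l.toFinset := h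
        have := Finset.card_le_card this
        omega
      obtain ⟨u, huS, v, hvT, hvS, huv⟩ := cross l.toFinset (List.mem_toFinset.mpr ht0l) hSsub t htT htS
      refine ⟨l ++ [v], ?_, ?_, ?_, ?_, ?_⟩
      · simp only [List.nodup_append]
        exact ⟨hnd, List.nodup_singleton v, by simpa using fun a ha (hav : a = v) => hvS (List.mem_toFinset.mpr (hav ▸ ha))⟩
      · intro x hx
        rcases List.mem_append.mp hx with h | h
        · exact hsub x h
        · simp at h; subst h; exact hvT
      · exact List.mem_append.mpr (Or.inl ht0l)
      · simp [hlen]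
      · intro j hj hjpos
        simp only [List.length_append, List.length_singleton] at hj
        by_cases hjl : j < l.length
        · obtain ⟨i, hi, hij, hadj⟩ := hch j hjl hjpos
          refine ⟨i, by simp; omega, hij, ?_⟩
          simp only [List.get_eq_getElem, List.getElem_append_left hi, List.getElem_append_left hjl] at *
          exact hadj
        · have hjeq : j = l.length := by omega
          have huL : u ∈ l := List.mem_toFinset.mp huS
          obtain ⟨⟨i, hil⟩, hiu⟩ := List.mem_iff_get.mp huL
          refine ⟨i, by simp; omega, by omega, ?_⟩
          have h1 : (l ++ [v]).get ⟨i, by simp; omega⟩ = u := by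
            rw [List.get_eq_getElem, List.getElem_append_left hil]; exact hiu
          have h2 : (l ++ [v]).get ⟨j, by simp; omega⟩ = v := by
            simp only [List.get_eq_getElem, hjeq]
            exact List.getElem_concat_length rfl _
          rw [h1, h2]; exact huv
  obtain ⟨l, hnd, hsub, _, hlen, hch⟩ := grow (T.card - 1) (by
    have : 1 ≤ T.card := Finset.card_pos.mpr ⟨t₀, ht₀⟩
    omega)
  refine ⟨l, hnd, ?_, hch⟩
  apply Finset.eq_of_subset_of_card_le
  · intro x hx; exact hsub x (List.mem_toFinset.mp hx)
  · rw [List.toFinset_card_of_nodup hnd, hlen]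
    have : 1 ≤ T.card := Finset.card_pos.mpr ⟨t₀, ht₀⟩
    omega



def vertsL (l : List (Finset V)) : Finset V := l.toFinset.biUnion id

def edgesL (l : List (Finset V)) : Finset (Finset V) :=
  l.toFinset.biUnion (Finset.powersetCard 2)

lemma vertsL_append (l : List (Finset V)) (t : Finset V) :
    vertsL (l ++ [t]) = vertsL l ∪ t := by
  simp only [vertsL, List.toFinset_append, List.toFinset_cons, List.toFinset_nil,
    insert_empty_eq, Finset.biUnion_insert]
  ext z; simp [or_comm]

lemma edgesL_append (l : List (Finset V)) (t : Finset V) :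
    edgesL (l ++ [t]) = edgesL l ∪ Finset.powersetCard 2 t := by
  simp only [edgesL, List.toFinset_append, List.toFinset_cons, List.toFinset_nil,
    insert_empty_eq, Finset.biUnion_insert]
  ext z; simp [or_comm]

lemma rtg_symm {r : V → V → Prop} (hsym : ∀ a b, r a b → r b a) {a b : V}
    (h : Relation.ReflTransGen r a b) : Relation.ReflTransGen r b a := by
  induction h with
  | refl => exact .refl
  | tail _ h₂ ih => exact .head (hsym _ _ h₂) ih

lemma main_list (l : List (Finset V)) (hnd : l.Nodup) (h3 : ∀ t ∈ l, t.card = 3)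
    (hmax : ∀ e : Finset V, e.card = 2 → l.countP (fun t => decide (e ⊆ t)) ≤ 2)
    (hch : ∀ (j : ℕ) (hj : j < l.length), 0 < j → ∃ (i : ℕ) (hi : i < l.length),
      i < j ∧ 2 ≤ ((l.get ⟨i, hi⟩) ∩ (l.get ⟨j, hj⟩)).card)
    (hne : l ≠ []) :
    ∃ R ⊆ edgesL l, (l.length - 1 ≤ R.card ∧
      (∀ e ∈ R, 2 ≤ l.countP (fun t => decide (e ⊆ t))) ∧
      ∀ x ∈ vertsL l, ∀ y ∈ vertsL l,
        Relation.ReflTransGen (fun a b => ({a, b} : Finset V) ∈ edgesL l \ R) x y) := by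
  classical
  induction l using List.reverseRecOn with
  | nil => exact absurd rfl hne
  | append_singleton l t ih =>
    by_cases hl : l = []
    · -- base case : single triangle
      subst hl
      refine ⟨∅, Finset.empty_subset _, by simp, by simp, ?_⟩
      intro x hx y hy
      simp only [vertsL, List.toFinset_append] at hx hy
      simp at hx hy
      by_cases hxy : x = y
      · subst hxy; exact .refl
      · refine Relation.ReflTransGen.single ?_
        simp only [edgesL, Finset.sdiff_empty]
        refine Finset.mem_biUnion.mpr ⟨t, by simp, ?_⟩
        rw [Finset.mem_powersetCard]
        exact ⟨by rw [Finset.insert_subset_iff]; exact ⟨hx, by simpa using hy⟩,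
          Finset.card_pair hxy⟩
    · -- inductive step
      have hndl : l.Nodup := (List.nodup_append.mp hnd).1
      have htnl : t ∉ l := by
        have h2 := hnd
        simp [List.nodup_append] at h2
        tauto
      have hlpos : 0 < l.length := List.length_pos_iff.mpr hl
      -- hypotheses for the prefix
      have h3' : ∀ s ∈ l, s.card = 3 := fun s hs => h3 s (List.mem_append.mpr (Or.inl hs))
      have hmax' : ∀ e : Finset V, e.card = 2 → l.countP (fun s => decide (e ⊆ s)) ≤ 2 := by
        intro e he
        have := hmax e he
        rw [List.countP_append] at this
        omega
      have hch' : ∀ (j : ℕ) (hj : j < l.length), 0 < j → ∃ (i : ℕ) (hi : i < l.length),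
          i < j ∧ 2 ≤ ((l.get ⟨i, hi⟩) ∩ (l.get ⟨j, hj⟩)).card := by
        intro j hj hjpos
        obtain ⟨i, hi, hij, hc⟩ := hch j (by simp; omega) hjpos
        have hil : i < l.length := by omega
        refine ⟨i, hil, hij, ?_⟩
        simp only [List.get_eq_getElem, List.getElem_append_left hil, List.getElem_append_left hj] at hc
        exact hc
      obtain ⟨R, hRsub, hRcard, hRcnt, hRconn⟩ := ih hndl h3' hmax' hch' hl
      -- the shared edge
      obtain ⟨i, hi, hij, hc⟩ := hch l.length (by simp) hlpos
      have hil : i < l.length := hij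
      set s := l.get ⟨i, hil⟩ with hs
      have hsl : s ∈ l := List.get_mem l ⟨i, hil⟩
      have hgt : (l ++ [t]).get ⟨l.length, by simp⟩ = t := by
        simp only [List.get_eq_getElem]
        exact List.getElem_concat_length rfl _
      have hgs : (l ++ [t]).get ⟨i, hi⟩ = s := by rw [List.get_eq_getElem, List.getElem_append_left hil]; rfl
      rw [hgs, hgt] at hc
      have htcard : t.card = 3 := h3 t (by simp)
      have hscard : s.card = 3 := h3' s hsl
      obtain ⟨e₀, he₀sub, he₀card⟩ := Finset.exists_subset_card_eq hc
      have he₀s : e₀ ⊆ s := he₀sub.trans Finset.inter_subset_left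
      have he₀t : e₀ ⊆ t := he₀sub.trans Finset.inter_subset_right
      obtain ⟨x, y, hxy, he₀xy⟩ := Finset.card_eq_two.mp he₀card
      -- the third vertex w
      have hwc : (t \ e₀).card = 1 := by rw [Finset.card_sdiff_of_subset he₀t, htcard, he₀card]
      obtain ⟨w, hw⟩ := Finset.card_eq_one.mp hwc
      have hwt : w ∈ t := by
        have : w ∈ t \ e₀ := hw ▸ Finset.mem_singleton_self w
        exact (Finset.mem_sdiff.mp this).1
      have hwe₀ : w ∉ e₀ := by
        have : w ∈ t \ e₀ := hw ▸ Finset.mem_singleton_self w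
        exact (Finset.mem_sdiff.mp this).2
      have ht_eq : t = {x, y, w} := by
        apply Finset.Subset.antisymm
        · intro z hz
          by_cases hze : z ∈ e₀
          · rw [he₀xy] at hze
            simp only [Finset.mem_insert, Finset.mem_singleton] at hze ⊢
            tauto
          · have : z ∈ t \ e₀ := Finset.mem_sdiff.mpr ⟨hz, hze⟩
            rw [hw] at this
            simp_all
        · intro z hz
          simp only [Finset.mem_insert, Finset.mem_singleton] at hz
          rcases hz with rfl | rfl | rfl
          · exact he₀t (he₀xy ▸ by simp)
          · exact he₀t (he₀xy ▸ by simp)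
          · exact hwt
      -- counting facts
      have hcnt_e₀_l : 1 ≤ l.countP (fun u => decide (e₀ ⊆ u)) :=
        List.countP_pos_iff.mpr ⟨s, hsl, by simpa using he₀s⟩
      have hcnt_app : ∀ e : Finset V, e ⊆ t →
          (l ++ [t]).countP (fun u => decide (e ⊆ u)) =
            l.countP (fun u => decide (e ⊆ u)) + 1 := by
        intro e he
        rw [List.countP_append]
        simp [he]
      have he₀R : e₀ ∉ R := by
        intro hmem
        have h1 := hRcnt e₀ hmem
        have h2 := hmax e₀ he₀card
        rw [hcnt_app e₀ he₀t] at h2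
        omega
      -- edges of t through w are not in R and not e₀
      have hedge_w : ∀ a ∈ e₀, ({a, w} : Finset V) ∈ edgesL (l ++ [t]) \ insert e₀ R := by
        intro a ha
        have haw : a ≠ w := fun h => hwe₀ (h ▸ ha)
        have hawt : ({a, w} : Finset V) ⊆ t := by
          rw [Finset.insert_subset_iff]
          exact ⟨he₀t ha, by simpa using hwt⟩
        have hawc : ({a, w} : Finset V).card = 2 := Finset.card_pair haw
        refine Finset.mem_sdiff.mpr ⟨?_, ?_⟩
        · rw [edgesL_append]
          exact Finset.mem_union_right _ (Finset.mem_powersetCard.mpr ⟨hawt, hawc⟩)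
        · intro hmem
          rcases Finset.mem_insert.mp hmem with heq | hR
          · exact hwe₀ (heq ▸ by simp)
          · have h1 := hRcnt _ hR
            have h2 := hmax _ hawc
            rw [hcnt_app _ hawt] at h2
            omega
      -- lifting old connectivity steps
      have step_lift : ∀ a b : V, ({a, b} : Finset V) ∈ edgesL l \ R →
          Relation.ReflTransGen
            (fun p q => ({p, q} : Finset V) ∈ edgesL (l ++ [t]) \ insert e₀ R) a b := by
        intro a b hab
        rw [Finset.mem_sdiff] at hab
        by_cases heq : ({a, b} : Finset V) = e₀
        · -- reroute through w
          have hae : a ∈ e₀ := heq ▸ by simp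
          have hbe : b ∈ e₀ := heq ▸ by simp
          have h1 := hedge_w a hae
          have h2 := hedge_w b hbe
          refine Relation.ReflTransGen.head h1 (Relation.ReflTransGen.single ?_)
          rwa [Finset.pair_comm] 
        · refine Relation.ReflTransGen.single ?_
          refine Finset.mem_sdiff.mpr ⟨?_, ?_⟩
          · rw [edgesL_append]; exact Finset.mem_union_left _ hab.1
          · intro hmem
            rcases Finset.mem_insert.mp hmem with h | h
            · exact heq h
            · exact hab.2 h
      have lift_rtg : ∀ a b : V,
          Relation.ReflTransGen (fun p q => ({p, q} : Finset V) ∈ edgesL l \ R) a b →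
          Relation.ReflTransGen
            (fun p q => ({p, q} : Finset V) ∈ edgesL (l ++ [t]) \ insert e₀ R) a b := by
        intro a b h
        induction h with
        | refl => exact .refl
        | tail _ h₂ ih => exact ih.trans (step_lift _ _ h₂)
      -- x is in the old vertex set
      have hxverts : x ∈ vertsL l :=
        Finset.mem_biUnion.mpr ⟨s, List.mem_toFinset.mpr hsl, he₀s (he₀xy ▸ by simp)⟩
      have hyverts : y ∈ vertsL l :=
        Finset.mem_biUnion.mpr ⟨s, List.mem_toFinset.mpr hsl, he₀s (he₀xy ▸ by simp)⟩
      -- everybody reaches x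
      have hreach : ∀ p ∈ vertsL (l ++ [t]),
          Relation.ReflTransGen
            (fun a b => ({a, b} : Finset V) ∈ edgesL (l ++ [t]) \ insert e₀ R) p x := by
        intro p hp
        rw [vertsL_append, Finset.mem_union] at hp
        by_cases hpl : p ∈ vertsL l
        · exact lift_rtg p x (hRconn p hpl x hxverts)
        · have hpt : p ∈ t := by tauto
          rw [ht_eq] at hpt
          simp only [Finset.mem_insert, Finset.mem_singleton] at hpt
          rcases hpt with rfl | rfl | rfl
          · exact absurd hxverts hpl
          · exact absurd hyverts hpl
          · -- p = w
            refine Relation.ReflTransGen.single ?_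
            rw [Finset.pair_comm]
            exact hedge_w x (he₀xy ▸ by simp)
      refine ⟨insert e₀ R, ?_, ?_, ?_, ?_⟩
      · intro e he
        rcases Finset.mem_insert.mp he with rfl | hR
        · rw [edgesL_append]
          exact Finset.mem_union_right _ (Finset.mem_powersetCard.mpr ⟨he₀t, he₀card⟩)
        · rw [edgesL_append]
          exact Finset.mem_union_left _ (hRsub hR)
      · rw [Finset.card_insert_of_notMem he₀R]
        simp only [List.length_append, List.length_singleton]
        omega
      · intro e he
        rcases Finset.mem_insert.mp he with rfl | hR
        · rw [hcnt_app e he₀t]; omega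
        · have := hRcnt e hR
          rw [List.countP_append]
          omega
      · intro p hp q hq
        have h1 := hreach p hp
        have h2 := hreach q hq
        have hsym : ∀ a b : V, ({a, b} : Finset V) ∈ edgesL (l ++ [t]) \ insert e₀ R →
            ({b, a} : Finset V) ∈ edgesL (l ++ [t]) \ insert e₀ R := by
          intro a b h; rwa [Finset.pair_comm]
        exact h1.trans (rtg_symm hsym h2)

lemma double_count (Δ : Finset (Finset V)) (hc : IsComplex Δ) (k : ℕ)
    (hnb : ∀ σ ∈ Δ, σ.card = k → (Δ.filter fun ρ => ρ.card = k + 1 ∧ σ ⊆ ρ).card = 2) :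
    2 * fm Δ k = (k + 1) * fm Δ (k + 1) := by
  classical
  set A := Δ.filter fun σ => σ.card = k with hA
  set B := Δ.filter fun σ => σ.card = k + 1 with hB
  have key : ∑ σ ∈ A, (B.filter fun ρ => σ ⊆ ρ).card
      = ∑ ρ ∈ B, (A.filter fun σ => σ ⊆ ρ).card := by
    simp only [Finset.card_filter]
    rw [Finset.sum_comm]
  have lhs : ∑ σ ∈ A, (B.filter fun ρ => σ ⊆ ρ).card = 2 * fm Δ k := by
    rw [Finset.sum_congr rfl (fun σ hσ => ?_), Finset.sum_const, smul_eq_mul, mul_comm]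
    · rfl
    · rw [hB, Finset.filter_filter]
      rw [hA, Finset.mem_filter] at hσ
      exact hnb σ hσ.1 hσ.2
  have rhs : ∑ ρ ∈ B, (A.filter fun σ => σ ⊆ ρ).card = (k + 1) * fm Δ (k + 1) := by
    rw [Finset.sum_congr rfl (fun ρ hρ => ?_), Finset.sum_const, smul_eq_mul, mul_comm]
    · rfl
    · rw [hB, Finset.mem_filter] at hρ
      have : A.filter (fun σ => σ ⊆ ρ) = ρ.powersetCard k := by
        ext τ
        rw [Finset.mem_powersetCard, hA, Finset.filter_filter, Finset.mem_filter]
        constructor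
        · rintro ⟨_, h1, h2⟩; exact ⟨h2, h1⟩
        · rintro ⟨h1, h2⟩; exact ⟨hc ρ hρ.1 τ h1, h2, h1⟩
      rw [this, Finset.card_powersetCard, hρ.2, Nat.choose_succ_self_right]
  rw [← lhs, key, rhs]

lemma fm_lk (Δ : Finset (Finset V)) (hc : IsComplex Δ) (v : V) (k : ℕ) :
    fm (lk Δ v) k = (Δ.filter fun τ => τ.card = k + 1 ∧ v ∈ τ).card := by
  classical
  apply Finset.card_bij (fun σ _ => insert v σ)
  · intro σ hσ
    simp only [lk, Finset.filter_filter, Finset.mem_filter] at hσ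
    obtain ⟨hσΔ, ⟨hv, hins⟩, hcard⟩ := hσ
    simp only [Finset.mem_filter]
    exact ⟨hins, by rw [Finset.card_insert_of_notMem hv, hcard], Finset.mem_insert_self v σ⟩
  · intro σ hσ σ' hσ' heq
    simp only [lk, Finset.filter_filter, Finset.mem_filter] at hσ hσ'
    have := congrArg (Finset.erase · v) heq
    simpa [Finset.erase_insert hσ.2.1.1, Finset.erase_insert hσ'.2.1.1] using this
  · intro τ hτ
    simp only [Finset.mem_filter] at hτ
    obtain ⟨hτΔ, hcard, hvτ⟩ := hτ
    refine ⟨τ.erase v, ?_, ?_⟩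
    · simp only [lk, Finset.filter_filter, Finset.mem_filter]
      refine ⟨hc τ hτΔ _ (Finset.erase_subset v τ), ⟨Finset.notMem_erase v τ, ?_⟩, ?_⟩
      · rwa [Finset.insert_erase hvτ]
      · rw [Finset.card_erase_of_mem hvτ, hcard]; rfl
    · rw [Finset.insert_erase hvτ]

lemma link_sum (Δ : Finset (Finset V)) (hc : IsComplex Δ) (k : ℕ) :
    ∑ v ∈ verts Δ, fm (lk Δ v) k = (k + 1) * fm Δ (k + 1) := by
  classical
  rw [Finset.sum_congr rfl (fun v _ => fm_lk Δ hc v k)]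
  set B := Δ.filter fun σ => σ.card = k + 1 with hB
  have key : ∑ v ∈ verts Δ, (Δ.filter fun τ => τ.card = k + 1 ∧ v ∈ τ).card
      = ∑ τ ∈ B, ((verts Δ).filter fun v => v ∈ τ).card := by
    have : ∀ v, (Δ.filter fun τ => τ.card = k + 1 ∧ v ∈ τ) = B.filter fun τ => v ∈ τ := by
      intro v; rw [hB, Finset.filter_filter]
    rw [Finset.sum_congr rfl fun v _ => congrArg Finset.card (this v)]
    simp only [Finset.card_filter]
    rw [Finset.sum_comm]
  rw [key, Finset.sum_congr rfl (fun τ hτ => ?_), Finset.sum_const, smul_eq_mul, mul_comm]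
  · rfl
  · rw [hB, Finset.mem_filter] at hτ
    have : (verts Δ).filter (fun v => v ∈ τ) = τ := by
      ext v
      simp only [Finset.mem_filter, verts, Finset.mem_biUnion, id]
      exact ⟨fun h => h.2, fun h => ⟨⟨τ, hτ.1, h⟩, h⟩⟩
    rw [this, hτ.2]

lemma chi_eq (Δ : Finset (Finset V)) (N : ℕ) (hN : ∀ σ ∈ Δ, σ.card ≤ N) :
    chi Δ = ∑ k ∈ Finset.Icc 1 N, (-1 : ℤ) ^ (k - 1) * fm Δ k := by
  classical
  have hmaps : ∀ σ ∈ Δ.filter (fun σ => σ ≠ ∅), σ.card ∈ Finset.Icc 1 N := by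
    intro σ hσ
    rw [Finset.mem_filter] at hσ
    rw [Finset.mem_Icc]
    exact ⟨Finset.card_pos.mpr (Finset.nonempty_of_ne_empty hσ.2), hN σ hσ.1⟩
  have hfib := Finset.sum_fiberwise_of_maps_to hmaps (fun σ => (-1 : ℤ) ^ (σ.card - 1))
  rw [chi, ← hfib]
  · apply Finset.sum_congr rfl
    intro k hk
    rw [Finset.mem_Icc] at hk
    have hset : (Δ.filter fun σ => σ ≠ ∅).filter (fun σ => σ.card = k)
        = Δ.filter fun σ => σ.card = k := by
      rw [Finset.filter_filter]
      apply Finset.filter_congr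
      intro σ _
      constructor
      · rintro ⟨_, h⟩; exact h
      · intro h
        refine ⟨?_, h⟩
        intro hemp
        rw [hemp] at h
        simp at h
        omega
    rw [hset, Finset.sum_congr rfl (fun σ hσ => by
        rw [(Finset.mem_filter.mp hσ).2]), Finset.sum_const, nsmul_eq_mul, mul_comm]
    rfl

lemma card_verts (Δ : Finset (Finset V)) (hc : IsComplex Δ) :
    (verts Δ).card = fm Δ 1 := by
  classical
  apply Finset.card_bij (fun v _ => ({v} : Finset V))
  · intro v hv
    simp only [verts, Finset.mem_biUnion, id] at hv
    obtain ⟨σ, hσ, hvσ⟩ := hv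
    simp only [Finset.mem_filter]
    exact ⟨hc σ hσ _ (Finset.singleton_subset_iff.mpr hvσ), Finset.card_singleton v⟩
  · intro a _ b _ h
    exact Finset.singleton_injective h
  · intro σ hσ
    simp only [Finset.mem_filter] at hσ
    obtain ⟨v, hv⟩ := Finset.card_eq_one.mp hσ.2
    exact ⟨v, by simp only [verts, Finset.mem_biUnion, id]; exact ⟨σ, hσ.1, by rw [hv]; exact Finset.mem_singleton_self v⟩, hv.symm⟩


lemma countP_eq_filter_card {α : Type*} [DecidableEq α] (l : List α) (hnd : l.Nodup)
    (p : α → Prop) [DecidablePred p] :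
    l.countP (fun a => decide (p a)) = (l.toFinset.filter p).card := by
  have h : (l.filter (fun a => decide (p a))).toFinset = l.toFinset.filter p := by
    ext a
    simp [List.mem_filter]
  rw [← h, List.toFinset_card_of_nodup (hnd.filter _), List.countP_eq_length_filter]

lemma link_chi_le (L : Finset (Finset V)) (hpm : PseudoManifold L 2) (hne : L.Nonempty) :
    chi L ≤ 2 := by
  classical
  obtain ⟨hc, hpure, hnb, hsc⟩ := hpm
  set T := L.filter (fun σ => σ.card = 3) with hT
  obtain ⟨σ₀, hσ₀⟩ := hne
  obtain ⟨ρ₀, hρ₀L, _, hρ₀c⟩ := hpure σ₀ hσ₀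
  have hTne : T.Nonempty := ⟨ρ₀, Finset.mem_filter.mpr ⟨hρ₀L, hρ₀c⟩⟩
  have hconn : ∀ s ∈ T, ∀ t ∈ T, Relation.ReflTransGen
      (fun a b => a ∈ T ∧ b ∈ T ∧ 2 ≤ (a ∩ b).card) s t := by
    intro s hs t ht
    rw [hT, Finset.mem_filter] at hs ht
    refine Relation.ReflTransGen.mono ?_ _ _ (hsc s hs.1 hs.2 t ht.1 ht.2)
    intro a b hab
    obtain ⟨h1, h2, h3, h4, h5⟩ := hab
    exact ⟨Finset.mem_filter.mpr ⟨h1, h3⟩, Finset.mem_filter.mpr ⟨h2, h4⟩, le_of_eq h5.symm⟩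
  obtain ⟨l, hnd, hlT, hch⟩ := exists_order T _ hconn hTne
  have hlne : l ≠ [] := by
    intro h
    rw [h] at hlT
    simp only [List.toFinset_nil] at hlT
    rw [← hlT] at hTne
    exact Finset.not_nonempty_empty hTne
  have h3 : ∀ t ∈ l, t.card = 3 := by
    intro t htl
    have : t ∈ T := hlT ▸ List.mem_toFinset.mpr htl
    exact (Finset.mem_filter.mp this).2
  have hTsubL : ∀ t ∈ T, t ∈ L := fun t ht => (Finset.mem_filter.mp ht).1
  have hmax : ∀ e : Finset V, e.card = 2 → l.countP (fun t => decide (e ⊆ t)) ≤ 2 := by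
    intro e he2
    rw [countP_eq_filter_card l hnd (fun t => e ⊆ t), hlT]
    by_cases heL : e ∈ L
    · have hnb2 := hnb e heL he2
      have heq : T.filter (fun t => e ⊆ t) = L.filter (fun ρ => ρ.card = 2 + 1 ∧ e ⊆ ρ) := by
        rw [hT, Finset.filter_filter]
      rw [heq, hnb2]
    · have : T.filter (fun t => e ⊆ t) = ∅ := by
        rw [Finset.filter_eq_empty_iff]
        intro t ht hsub
        exact heL (hc t (hTsubL t ht) e hsub)
      rw [this]
      simp
  obtain ⟨R, hRsub, hRcard, hRcnt, hRconn⟩ := main_list l hnd h3 hmax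
    (fun j hj hjpos => hch j hj hjpos) hlne
  -- a base vertex
  obtain ⟨t₀, ht₀⟩ := List.exists_mem_of_ne_nil l hlne
  obtain ⟨v₀, hv₀t⟩ := Finset.card_pos.mp (by rw [h3 t₀ ht₀]; norm_num : 0 < t₀.card)
  have hv₀ : v₀ ∈ vertsL l :=
    Finset.mem_biUnion.mpr ⟨t₀, List.mem_toFinset.mpr ht₀, hv₀t⟩
  have hVC : (vertsL l).card ≤ (edgesL l \ R).card + 1 :=
    graph_card (edgesL l \ R) v₀ (vertsL l) (fun x hx => hRconn v₀ hv₀ x hx)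
  have hsd : (edgesL l \ R).card = (edgesL l).card - R.card := Finset.card_sdiff_of_subset hRsub
  have hRb : R.card ≤ (edgesL l).card := Finset.card_le_card hRsub
  -- identifications of face numbers
  have hfm3 : fm L 3 = l.length := by
    rw [show fm L 3 = T.card from rfl, ← hlT, List.toFinset_card_of_nodup hnd]
  have hfm2 : fm L 2 = (edgesL l).card := by
    have heq : L.filter (fun σ => σ.card = 2) = edgesL l := by
      ext e
      simp only [edgesL, Finset.mem_biUnion, Finset.mem_filter, Finset.mem_powersetCard, hlT]
      constructor
      · rintro ⟨heL, he2⟩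
        obtain ⟨ρ, hρL, hsub, hρ3⟩ := hpure e heL
        exact ⟨ρ, Finset.mem_filter.mpr ⟨hρL, hρ3⟩, hsub, he2⟩
      · rintro ⟨t, htT, hsub, he2⟩
        exact ⟨hc t (hTsubL t htT) e hsub, he2⟩
    rw [show fm L 2 = (L.filter fun σ => σ.card = 2).card from rfl, heq]
  have hfm1 : fm L 1 = (vertsL l).card := by
    have hverts : verts L = vertsL l := by
      ext v
      simp only [verts, vertsL, Finset.mem_biUnion, id, hlT]
      constructor
      · rintro ⟨σ, hσL, hv⟩
        obtain ⟨ρ, hρL, hsub, hρ3⟩ := hpure σ hσL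
        exact ⟨ρ, Finset.mem_filter.mpr ⟨hρL, hρ3⟩, hsub hv⟩
      · rintro ⟨t, htT, hv⟩
        exact ⟨t, hTsubL t htT, hv⟩
    rw [← card_verts L hc, hverts]
  have hcards : ∀ σ ∈ L, σ.card ≤ 3 := by
    intro σ hσ
    obtain ⟨ρ, _, hsub, hρ3⟩ := hpure σ hσ
    have := Finset.card_le_card hsub
    omega
  have hchiL : chi L = (fm L 1 : ℤ) - fm L 2 + fm L 3 := by
    rw [chi_eq L 3 hcards, show (Finset.Icc 1 3 : Finset ℕ) = {1, 2, 3} from by decide,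
      Finset.sum_insert (by decide), Finset.sum_insert (by decide), Finset.sum_singleton]
    norm_num
    try ring
  have hlen : l.length ≠ 0 := fun h => hlne (List.length_eq_zero_iff.mp h)
  rw [hchiL, hfm1, hfm2, hfm3]
  omega

/-- There is no 3-dimensional normal simplicial pseudo manifold with
Euler characteristic −1; in particular no such complex has `χ = 2 − 4 + 2 − 1 = −1`,
the Euler characteristic of the gluing dual to the GFT graph `G¹`. -/
theorem stmt18 :
    ∀ (W : Type) [DecidableEq W] (Δ : Finset (Finset W)),
      PseudoManifold Δ 3 → Normal3 Δ → chi Δ ≠ -1 := by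
  intro W _ Δ hPM hN
  classical
  obtain ⟨hc, hpure, hnb, hsc⟩ := hPM
  have hcards : ∀ σ ∈ Δ, σ.card ≤ 4 := by
    intro σ hσ
    obtain ⟨ρ, _, hsub, hρ⟩ := hpure σ hσ
    have := Finset.card_le_card hsub
    omega
  have hchi : chi Δ = (fm Δ 1 : ℤ) - fm Δ 2 + fm Δ 3 - fm Δ 4 := by
    rw [chi_eq Δ 4 hcards, show (Finset.Icc 1 4 : Finset ℕ) = {1, 2, 3, 4} from by decide,
      Finset.sum_insert (by decide), Finset.sum_insert (by decide),
      Finset.sum_insert (by decide), Finset.sum_singleton]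
    norm_num
    try ring
  have hDS : 2 * fm Δ 3 = 4 * fm Δ 4 := double_count Δ hc 3 hnb
  -- per-vertex link bound
  have hlink : ∀ v ∈ verts Δ,
      (fm (lk Δ v) 1 : ℤ) - fm (lk Δ v) 2 + fm (lk Δ v) 3 ≤ 2 := by
    intro v hv
    have hpm := hN v hv
    have hLcards : ∀ σ ∈ lk Δ v, σ.card ≤ 3 := by
      intro σ hσ
      obtain ⟨ρ, _, hsub, hρ⟩ := hpm.2.1 σ hσ
      have := Finset.card_le_card hsub
      omega
    have hvs : ({v} : Finset W) ∈ Δ := by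
      obtain ⟨σ, hσ, hvσ⟩ := Finset.mem_biUnion.mp hv
      exact hc σ hσ {v} (Finset.singleton_subset_iff.mpr hvσ)
    have hLne : (lk Δ v).Nonempty := by
      refine ⟨∅, Finset.mem_filter.mpr ⟨hc _ hvs ∅ (Finset.empty_subset _), ?_, ?_⟩⟩
      · exact Finset.notMem_empty v
      · simpa using hvs
    have h1 := link_chi_le _ hpm hLne
    have h2 : chi (lk Δ v) = (fm (lk Δ v) 1 : ℤ) - fm (lk Δ v) 2 + fm (lk Δ v) 3 := by
      rw [chi_eq _ 3 hLcards, show (Finset.Icc 1 3 : Finset ℕ) = {1, 2, 3} from by decide,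
        Finset.sum_insert (by decide), Finset.sum_insert (by decide), Finset.sum_singleton]
      norm_num
      try ring
    linarith [h1, h2.symm.trans_le h1]
  have hsum : (2 * fm Δ 2 : ℤ) - 3 * fm Δ 3 + 4 * fm Δ 4 ≤ 2 * fm Δ 1 := by
    have h1 : ∑ v ∈ verts Δ, ((fm (lk Δ v) 1 : ℤ) - fm (lk Δ v) 2 + fm (lk Δ v) 3)
        ≤ ∑ _v ∈ verts Δ, (2 : ℤ) := Finset.sum_le_sum hlink
    rw [Finset.sum_const, nsmul_eq_mul, mul_comm, card_verts Δ hc] at h1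
    have h2 : ∑ v ∈ verts Δ, ((fm (lk Δ v) 1 : ℤ) - fm (lk Δ v) 2 + fm (lk Δ v) 3)
        = (2 * fm Δ 2 : ℤ) - 3 * fm Δ 3 + 4 * fm Δ 4 := by
      rw [Finset.sum_add_distrib, Finset.sum_sub_distrib]
      rw [← Nat.cast_sum, ← Nat.cast_sum, ← Nat.cast_sum,
        link_sum Δ hc 1, link_sum Δ hc 2, link_sum Δ hc 3]
      push_cast
      ring
    rw [h2] at h1
    linarith
  intro hcon
  rw [hcon] at hchi
  omega
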